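/- Let x, y : Fin n → ℝᵈ, let h, g : ℝ → ℝ be strictly antitone functions, and suppose y i = s • (W (x i)) + t for all i with s ≠ 0, W orthogonal, and t ∈ ℝᵈ. Define p over pairs (i,j) with i < j by p (i,j) = h ‖x i - x j‖, and q (i,j) = g ‖y i - y j‖, and let R_p, R_q denote their rank functions (rank of a pair = number of pairs with value ≤ its value). Suppose the sample variance of R_p is positive. Then the Spearman rank correlation T(R_p, R_q) = 1. -/

import Mathlib

open scoped Classical

/-- The rank of an entry of a finite real sequence: the number of entries `≤` it. -/
noncomputable def rankOf {α : Type*} [Fintype α] (v : α → ℝ) (r : α) : ℝ :=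
  ((Finset.univ.filter (fun l => v l ≤ v r)).card : ℝ)

/-- The sample mean of a finite sequence. -/
noncomputable def sampleMean {α : Type*} [Fintype α] (R : α → ℝ) : ℝ :=
  (∑ k, R k) / (Fintype.card α)

/-- The (biased) sample variance of a finite sequence. -/
noncomputable def sampleVar {α : Type*} [Fintype α] (R : α → ℝ) : ℝ :=
  (∑ k, (R k - sampleMean R) ^ 2) / (Fintype.card α)

/-- The sample covariance of two finite sequences. -/
noncomputable def sampleCov {α : Type*} [Fintype α] (R S : α → ℝ) : ℝ :=
  (∑ k, (R k - sampleMean R) * (S k - sampleMean S)) / (Fintype.card α)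

/-- The sample (Pearson) correlation of two finite sequences; applied to rank sequences
this is the Spearman rank correlation. -/
noncomputable def sampleCorr {α : Type*} [Fintype α] (R S : α → ℝ) : ℝ :=
  sampleCov R S / (Real.sqrt (sampleVar R) * Real.sqrt (sampleVar S))

/-- Validity direction of the test: under the null hypothesis that the latent positions
are related by a similarity transformation, the Spearman rank correlation between the
two edge-probability sequences (indexed by pairs `i < j`) equals exactly 1. -/
theorem spearman_eq_one_under_null
    {n d : ℕ} (x y : Fin n → EuclideanSpace ℝ (Fin d))
    (h g : ℝ → ℝ) (hh : StrictAnti h) (hg : StrictAnti g)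
    (s : ℝ) (hs : s ≠ 0)
    (W : EuclideanSpace ℝ (Fin d) →ₗᵢ[ℝ] EuclideanSpace ℝ (Fin d))
    (t : EuclideanSpace ℝ (Fin d))
    (hy : ∀ i, y i = s • W (x i) + t)
    (p q : {e : Fin n × Fin n // e.1 < e.2} → ℝ)
    (hp : ∀ e, p e = h ‖x e.1.1 - x e.1.2‖)
    (hq : ∀ e, q e = g ‖y e.1.1 - y e.1.2‖)
    (hvar : 0 < sampleVar (rankOf p)) :
    sampleCorr (rankOf p) (rankOf q) = 1 := by
  have hnorm : ∀ i j, ‖y i - y j‖ = |s| * ‖x i - x j‖ := by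
    intro i j
    rw [hy i, hy j]
    have : s • W (x i) + t - (s • W (x j) + t) = s • (W (x i) - W (x j)) := by
      rw [smul_sub]; abel
    rw [this, norm_smul, ← map_sub, W.norm_map]
    simp [Real.norm_eq_abs]
  have hle : ∀ e e', q e ≤ q e' ↔ p e ≤ p e' := by
    intro e e'
    rw [hq, hq, hp, hp, hg.le_iff_ge, hh.le_iff_ge, hnorm, hnorm]
    constructor
    · intro hle'
      exact le_of_mul_le_mul_left hle' (abs_pos.mpr hs)
    · intro hle'
      exact mul_le_mul_of_nonneg_left hle' (abs_nonneg s)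
  have hrank : rankOf q = rankOf p := by
    funext r
    unfold rankOf
    congr 1
    apply Finset.card_bij (fun a _ => a) <;> intro a <;> simp [hle]
  rw [hrank]
  unfold sampleCorr
  rw [← Real.sqrt_mul_self (le_of_lt hvar)]
  have hcov : sampleCov (rankOf p) (rankOf p) = sampleVar (rankOf p) := by
    unfold sampleCov sampleVar
    congr 1
    exact Finset.sum_congr rfl (fun k _ => (sq (rankOf p k - sampleMean (rankOf p))).symm)
  rw [hcov]
  field_simp
  rw [Real.sqrt_sq hvar.le, Real.sq_sqrt hvar.le]
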